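/- Hölder-seminorm bound for the boundary bump functions: for ε ∈ (0,1) and α ∈ (0,1), the function φ(x,y,z) = σ(x/ε)·σ(x‖y−ȳ‖)·σ(ε x²‖z−z̄‖) on the half-cube [0,1)×(−1,1)^b×(−1,1)^f satisfies |φ(p) − φ(p')| ≤ C ε^{−α} (|x−x'|^α + (x+x')^α‖y−y'‖^α + (x+x')^{2α}‖z−z'‖^α) for all p=(x,y,z), p'=(x',y',z'), with C independent of ε and of the centers ȳ, z̄; consequently [φ]_{α,Φ} ≤ C' ε^{−α} with respect to the Φ-distance d_{2,Φ}. -/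

import Mathlib

open Real

lemma aux_rpow_add_le {a b p : ℝ} (ha : 0 ≤ a) (hb : 0 ≤ b) (hp : 0 ≤ p) (hp1 : p ≤ 1) :
    (a + b) ^ p ≤ a ^ p + b ^ p := by
  have h := NNReal.rpow_add_le_add_rpow (⟨a, ha⟩ : NNReal) (⟨b, hb⟩ : NNReal) hp hp1
  have := (NNReal.coe_le_coe).2 h
  exact this

lemma aux_min_le_rpow {t p : ℝ} (ht : 0 ≤ t) (hp : 0 < p) (hp1 : p ≤ 1) :
    min 1 t ≤ t ^ p := by
  rcases le_total t 1 with h | h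
  · refine le_trans (min_le_right _ _) ?_
    calc t = t ^ (1:ℝ) := (Real.rpow_one t).symm
    _ ≤ t ^ p := Real.rpow_le_rpow_of_exponent_ge' ht h hp.le hp1
  · exact le_trans (min_le_left _ _) (Real.one_le_rpow h hp.le)

lemma aux_rpow_le_one_add {t p : ℝ} (ht : 0 ≤ t) (hp : 0 ≤ p) (hp1 : p ≤ 1) :
    t ^ p ≤ 1 + t := by
  rcases le_total t 1 with h | h
  · have : t ^ p ≤ 1 := Real.rpow_le_one ht h hp
    linarith
  · have : t ^ p ≤ t ^ (1:ℝ) := Real.rpow_le_rpow_of_exponent_le h hp1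
    rw [Real.rpow_one] at this; linarith

lemma aux_norm_le {n : ℕ} (v w : EuclideanSpace ℝ (Fin n))
    (hv : ∀ i, |v i| ≤ 1) (hw : ∀ i, |w i| ≤ 1) : ‖v - w‖ ≤ 2 * Real.sqrt n := by
  rw [EuclideanSpace.norm_eq]
  have h1 : ∑ i, ‖(v - w) i‖ ^ 2 ≤ ∑ _i : Fin n, (4:ℝ) := by
    apply Finset.sum_le_sum
    intro i _
    have : ‖(v - w) i‖ ≤ 2 := by
      have : (v - w) i = v i - w i := rfl
      rw [this, Real.norm_eq_abs]
      calc |v i - w i| ≤ |v i| + |w i| := abs_sub _ _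
      _ ≤ 2 := by linarith [hv i, hw i]
    nlinarith [norm_nonneg ((v - w) i)]
  calc Real.sqrt (∑ i, ‖(v - w) i‖ ^ 2) ≤ Real.sqrt (∑ _i : Fin n, (4:ℝ)) :=
        Real.sqrt_le_sqrt h1
  _ = 2 * Real.sqrt n := by
      rw [Finset.sum_const, Finset.card_univ, Fintype.card_fin, nsmul_eq_mul]
      have h : (n:ℝ) * 4 = (2 * Real.sqrt n) ^ 2 := by
        have := Real.sq_sqrt (by positivity : (0:ℝ) ≤ (n:ℝ)); nlinarith
      rw [h, Real.sqrt_sq (by positivity)]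

lemma aux_prod_diff {A B C A' B' C' : ℝ}
    (hA : A ∈ Set.Icc (0:ℝ) 1) (hB : B ∈ Set.Icc (0:ℝ) 1) (hC : C ∈ Set.Icc (0:ℝ) 1)
    (hA' : A' ∈ Set.Icc (0:ℝ) 1) (hB' : B' ∈ Set.Icc (0:ℝ) 1) (hC' : C' ∈ Set.Icc (0:ℝ) 1) :
    |A * B * C - A' * B' * C'| ≤ |A - A'| + |B - B'| + |C - C'| := by
  have key : A * B * C - A' * B' * C' = (A - A') * (B * C) + A' * ((B - B') * C) + (A' * B') * (C - C') := by ring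
  obtain ⟨hA0, hA1⟩ := hA; obtain ⟨hB0, hB1⟩ := hB; obtain ⟨hC0, hC1⟩ := hC
  obtain ⟨hA'0, hA'1⟩ := hA'; obtain ⟨hB'0, hB'1⟩ := hB'; obtain ⟨hC'0, hC'1⟩ := hC'
  have e1 : |(A - A') * (B * C)| ≤ |A - A'| := by
    rw [abs_mul]
    have hbc : |B * C| ≤ 1 := by
      rw [abs_of_nonneg (mul_nonneg hB0 hC0)]; nlinarith
    exact mul_le_of_le_one_right (abs_nonneg _) hbc
  have e2 : |A' * ((B - B') * C)| ≤ |B - B'| := by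
    rw [abs_mul, abs_mul, abs_of_nonneg hA'0, abs_of_nonneg hC0]
    have t1 : |B - B'| * C ≤ |B - B'| * 1 := mul_le_mul_of_nonneg_left hC1 (abs_nonneg _)
    have t2 : A' * (|B - B'| * C) ≤ 1 * (|B - B'| * C) :=
      mul_le_mul_of_nonneg_right hA'1 (mul_nonneg (abs_nonneg _) hC0)
    linarith
  have e3 : |A' * B' * (C - C')| ≤ |C - C'| := by
    rw [abs_mul, abs_mul, abs_of_nonneg hA'0, abs_of_nonneg hB'0]
    have t1 : A' * B' ≤ 1 := by nlinarith
    have t2 : A' * B' * |C - C'| ≤ 1 * |C - C'| :=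
      mul_le_mul_of_nonneg_right t1 (abs_nonneg _)
    linarith
  calc |A * B * C - A' * B' * C'|
      ≤ |(A - A') * (B * C)| + |A' * ((B - B') * C)| + |A' * B' * (C - C')| := by
        rw [key]; exact abs_add_three _ _ _
  _ ≤ |A - A'| + |B - B'| + |C - C'| := by linarith

set_option maxHeartbeats 1000000 in
/-- Hölder-seminorm bound for the boundary bump functions: there are constants
`C, C' > 0`, independent of `ε ∈ (0,1)` and of the centers `ȳ, z̄`, such that
`φ(x,y,z) = σ(x/ε)·σ(x‖y−ȳ‖)·σ(εx²‖z−z̄‖)` on the half-cube satisfies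
`|φ(p)−φ(p')| ≤ C ε^{−α}(|x−x'|^α + (x+x')^α‖y−y'‖^α + (x+x')^{2α}‖z−z'‖^α)`,
and hence `|φ(p)−φ(p')| ≤ C' ε^{−α} d_{2,Φ}(p,p')^α`. -/
theorem stmt_17 (b f : ℕ) (α : ℝ) (hα : α ∈ Set.Ioo (0 : ℝ) 1)
    (σ : ℝ → ℝ) (L : NNReal) (hσLip : LipschitzWith L σ)
    (hσrange : ∀ x : ℝ, σ x ∈ Set.Icc (0 : ℝ) 1)
    (hσ1 : ∀ x ∈ Set.Icc (0 : ℝ) (1 / 2), σ x = 1)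
    (hσ0 : ∀ x : ℝ, 1 ≤ x → σ x = 0) :
    ∃ C > (0 : ℝ), ∃ C' > (0 : ℝ), ∀ ε ∈ Set.Ioo (0 : ℝ) 1,
      ∀ (ybar : EuclideanSpace ℝ (Fin b)) (zbar : EuclideanSpace ℝ (Fin f)),
      (∀ i, |ybar i| ≤ 1) → (∀ i, |zbar i| ≤ 1) →
      ∀ x x' : ℝ, x ∈ Set.Ico (0 : ℝ) 1 → x' ∈ Set.Ico (0 : ℝ) 1 →
      ∀ (y y' : EuclideanSpace ℝ (Fin b)) (z z' : EuclideanSpace ℝ (Fin f)),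
      (∀ i, |y i| < 1) → (∀ i, |y' i| < 1) → (∀ i, |z i| < 1) → (∀ i, |z' i| < 1) →
      |σ (x / ε) * σ (x * ‖y - ybar‖) * σ (ε * x ^ 2 * ‖z - zbar‖) -
          σ (x' / ε) * σ (x' * ‖y' - ybar‖) * σ (ε * x' ^ 2 * ‖z' - zbar‖)| ≤
        C * ε ^ (-α) * (|x - x'| ^ α + (x + x') ^ α * ‖y - y'‖ ^ α +
          (x + x') ^ (2 * α) * ‖z - z'‖ ^ α) ∧
      |σ (x / ε) * σ (x * ‖y - ybar‖) * σ (ε * x ^ 2 * ‖z - zbar‖) -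
          σ (x' / ε) * σ (x' * ‖y' - ybar‖) * σ (ε * x' ^ 2 * ‖z' - zbar‖)| ≤
        C' * ε ^ (-α) *
          (Real.sqrt (|x - x'| ^ 2 + (x + x') ^ 2 * ‖y - y'‖ ^ 2 +
            (x + x') ^ 4 * ‖z - z'‖ ^ 2)) ^ α := by
  obtain ⟨hα0, hα1⟩ := hα
  set M : ℝ := (1 + (L:ℝ)) * (1 + 2 * Real.sqrt b) * (1 + 4 * Real.sqrt f) with hM
  have hL0 : (0:ℝ) ≤ L := L.coe_nonneg
  have hsb : (0:ℝ) ≤ Real.sqrt b := Real.sqrt_nonneg _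
  have hsf : (0:ℝ) ≤ Real.sqrt f := Real.sqrt_nonneg _
  have h12 : (1:ℝ) ≤ (1 + (L:ℝ)) * (1 + 2 * Real.sqrt b) := by nlinarith
  have hM1 : (1:ℝ) ≤ M := by rw [hM]; nlinarith
  have hM0 : (0:ℝ) < M := lt_of_lt_of_le one_pos hM1
  have hM3 : (1 + (L:ℝ)) * (1 + 2 * Real.sqrt b) ≤ M := by
    rw [hM]; exact le_mul_of_one_le_right (by positivity) (by linarith)
  have hM2 : 1 + (L:ℝ) ≤ M :=
    le_trans (le_mul_of_one_le_right (by linarith) (by linarith)) hM3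
  have hM4 : (1 + (L:ℝ)) * (1 + 4 * Real.sqrt f) ≤ M := by
    rw [hM]
    exact mul_le_mul_of_nonneg_right
      (le_mul_of_one_le_right (by linarith) (by linarith)) (by positivity)
  refine ⟨3 * M, by linarith, 9 * M, by linarith, ?_⟩
  rintro ε ⟨hε0, hε1⟩ ybar zbar hybar hzbar x x' ⟨hx0, hx1⟩ ⟨hx'0, hx'1⟩
    y y' z z' hy hy' hz hz'
  -- basic notation
  have hεα : (1:ℝ) ≤ ε ^ (-α) :=
    Real.one_le_rpow_of_pos_of_le_one_of_nonpos hε0 hε1.le (by linarith)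
  have hσd : ∀ a c : ℝ, |σ a - σ c| ≤ min 1 ((L:ℝ) * |a - c|) := by
    intro a c
    refine le_min ?_ ?_
    · obtain ⟨h1, h2⟩ := hσrange a; obtain ⟨h3, h4⟩ := hσrange c
      rw [abs_sub_le_iff]; constructor <;> linarith
    · have := hσLip.dist_le_mul a c
      rwa [Real.dist_eq, Real.dist_eq] at this
  have hNy : ‖y - ybar‖ ≤ 2 * Real.sqrt b :=
    aux_norm_le y ybar (fun i => (hy i).le) hybar
  have hNy' : ‖y' - ybar‖ ≤ 2 * Real.sqrt b :=
    aux_norm_le y' ybar (fun i => (hy' i).le) hybar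
  have hNz : ‖z - zbar‖ ≤ 2 * Real.sqrt f :=
    aux_norm_le z zbar (fun i => (hz i).le) hzbar
  have hNz' : ‖z' - zbar‖ ≤ 2 * Real.sqrt f :=
    aux_norm_le z' zbar (fun i => (hz' i).le) hzbar
  set d1 : ℝ := |x - x'| with hd1
  set s : ℝ := x + x' with hs
  set Y : ℝ := ‖y - y'‖ with hY
  set Z : ℝ := ‖z - z'‖ with hZ
  have hd10 : 0 ≤ d1 := abs_nonneg _
  have hs0 : 0 ≤ s := by simp only [hs]; linarith
  have hs2 : s ≤ 2 := by simp only [hs]; linarith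
  have hY0 : 0 ≤ Y := norm_nonneg _
  have hZ0 : 0 ≤ Z := norm_nonneg _
  -- rpow nonneg facts
  have hd1α : 0 ≤ d1 ^ α := Real.rpow_nonneg hd10 α
  have hsα : 0 ≤ s ^ α := Real.rpow_nonneg hs0 α
  have hs2α : 0 ≤ s ^ (2*α) := Real.rpow_nonneg hs0 _
  have hYα : 0 ≤ Y ^ α := Real.rpow_nonneg hY0 α
  have hZα : 0 ≤ Z ^ α := Real.rpow_nonneg hZ0 α
  have hLα : ((L:ℝ)) ^ α ≤ 1 + (L:ℝ) := aux_rpow_le_one_add hL0 hα0.le hα1.le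
  have hεα0 : 0 ≤ ε ^ (-α) := Real.rpow_nonneg hε0.le _
  -- Term 1
  have T1 : |σ (x/ε) - σ (x'/ε)| ≤ M * (ε ^ (-α) * d1 ^ α) := by
    have harg : |x/ε - x'/ε| = d1 / ε := by
      rw [div_sub_div_same, hd1, abs_div, abs_of_pos hε0]
    have h1 : |σ (x/ε) - σ (x'/ε)| ≤ min 1 ((L:ℝ) * (d1/ε)) := by
      have := hσd (x/ε) (x'/ε); rwa [harg] at this
    have h2 : min 1 ((L:ℝ) * (d1/ε)) ≤ ((L:ℝ) * (d1/ε)) ^ α :=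
      aux_min_le_rpow (by positivity) hα0 hα1.le
    have h3 : ((L:ℝ) * (d1/ε)) ^ α = (L:ℝ)^α * (d1^α * ε ^ (-α)) := by
      rw [Real.mul_rpow hL0 (by positivity), Real.div_rpow hd10 hε0.le,
        Real.rpow_neg hε0.le, div_eq_mul_inv]
    have h4 : (L:ℝ)^α * (d1^α * ε ^ (-α)) ≤ M * (ε ^ (-α) * d1 ^ α) := by
      have hfac : (L:ℝ)^α ≤ M := le_trans hLα hM2
      have hnn : 0 ≤ d1^α * ε ^ (-α) := mul_nonneg hd1α hεα0
      calc (L:ℝ)^α * (d1^α * ε ^ (-α)) ≤ M * (d1^α * ε ^ (-α)) :=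
            mul_le_mul_of_nonneg_right hfac hnn
      _ = M * (ε ^ (-α) * d1 ^ α) := by ring
    calc |σ (x/ε) - σ (x'/ε)| ≤ ((L:ℝ) * (d1/ε)) ^ α := le_trans h1 h2
    _ = (L:ℝ)^α * (d1^α * ε ^ (-α)) := h3
    _ ≤ M * (ε ^ (-α) * d1 ^ α) := h4
  -- Term 2
  have T2 : |σ (x * ‖y - ybar‖) - σ (x' * ‖y' - ybar‖)| ≤
      M * (d1 ^ α + s ^ α * Y ^ α) := by
    have hNdiff : |‖y - ybar‖ - ‖y' - ybar‖| ≤ Y := by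
      have h := abs_norm_sub_norm_le (y - ybar) (y' - ybar)
      have : (y - ybar) - (y' - ybar) = y - y' := by abel
      rwa [this] at h
    have harg : |x * ‖y - ybar‖ - x' * ‖y' - ybar‖| ≤ 2 * Real.sqrt b * d1 + s * Y := by
      have key : x * ‖y - ybar‖ - x' * ‖y' - ybar‖ =
          (x - x') * ‖y - ybar‖ + x' * (‖y - ybar‖ - ‖y' - ybar‖) := by ring
      calc |x * ‖y - ybar‖ - x' * ‖y' - ybar‖|
          ≤ |(x - x') * ‖y - ybar‖| + |x' * (‖y - ybar‖ - ‖y' - ybar‖)| := by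
            rw [key]; exact abs_add_le _ _
      _ = d1 * ‖y - ybar‖ + x' * |‖y - ybar‖ - ‖y' - ybar‖| := by
            rw [abs_mul, abs_mul, abs_of_nonneg hx'0, abs_of_nonneg (norm_nonneg _)]
      _ ≤ d1 * (2 * Real.sqrt b) + s * Y := by
            have e1 : d1 * ‖y - ybar‖ ≤ d1 * (2 * Real.sqrt b) :=
              mul_le_mul_of_nonneg_left hNy hd10
            have e2 : x' * |‖y - ybar‖ - ‖y' - ybar‖| ≤ x' * Y :=
              mul_le_mul_of_nonneg_left hNdiff hx'0
            have e3 : x' * Y ≤ s * Y := by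
              apply mul_le_mul_of_nonneg_right _ hY0
              simp only [hs]; linarith
            linarith
      _ = 2 * Real.sqrt b * d1 + s * Y := by ring
    set u : ℝ := 2 * Real.sqrt b * d1 + s * Y with hu
    have hu0 : 0 ≤ u := by positivity
    have h1 : |σ (x * ‖y - ybar‖) - σ (x' * ‖y' - ybar‖)| ≤ min 1 ((L:ℝ) * u) := by
      refine le_trans (hσd _ _) (min_le_min le_rfl ?_)
      exact mul_le_mul_of_nonneg_left harg hL0
    have h2 : min 1 ((L:ℝ) * u) ≤ ((L:ℝ) * u) ^ α :=
      aux_min_le_rpow (by positivity) hα0 hα1.le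
    have h3 : ((L:ℝ) * u) ^ α ≤ (L:ℝ)^α * ((2 * Real.sqrt b * d1) ^ α + (s * Y) ^ α) := by
      rw [Real.mul_rpow hL0 hu0]
      apply mul_le_mul_of_nonneg_left _ (Real.rpow_nonneg hL0 α)
      exact aux_rpow_add_le (by positivity) (by positivity) hα0.le hα1.le
    have h4 : (2 * Real.sqrt b * d1) ^ α = (2*Real.sqrt b)^α * d1^α :=
      Real.mul_rpow (by positivity) hd10
    have h5 : (s * Y) ^ α = s^α * Y^α := Real.mul_rpow hs0 hY0
    have hfac : (2*Real.sqrt b)^α ≤ 1 + 2*Real.sqrt b :=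
      aux_rpow_le_one_add (by positivity) hα0.le hα1.le
    calc |σ (x * ‖y - ybar‖) - σ (x' * ‖y' - ybar‖)|
        ≤ (L:ℝ)^α * ((2*Real.sqrt b)^α * d1^α + s^α * Y^α) := by
          rw [← h4, ← h5]; exact le_trans h1 (le_trans h2 h3)
    _ ≤ M * (d1 ^ α + s ^ α * Y ^ α) := by
        have hLαnn : 0 ≤ (L:ℝ)^α := Real.rpow_nonneg hL0 α
        have step1 : (L:ℝ)^α * ((2*Real.sqrt b)^α * d1^α + s^α * Y^α) ≤
            (1+(L:ℝ)) * ((1+2*Real.sqrt b) * d1^α + s^α * Y^α) := by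
          have i1 : (2*Real.sqrt b)^α * d1^α ≤ (1+2*Real.sqrt b) * d1^α :=
            mul_le_mul_of_nonneg_right hfac hd1α
          have i2 : (2*Real.sqrt b)^α * d1^α + s^α * Y^α ≤
              (1+2*Real.sqrt b) * d1^α + s^α * Y^α := by linarith
          have i3 : 0 ≤ (2*Real.sqrt b)^α * d1^α + s^α * Y^α :=
            add_nonneg (mul_nonneg (Real.rpow_nonneg (by positivity) α) hd1α)
              (mul_nonneg hsα hYα)
          calc (L:ℝ)^α * ((2*Real.sqrt b)^α * d1^α + s^α * Y^α)
              ≤ (1+(L:ℝ)) * ((2*Real.sqrt b)^α * d1^α + s^α * Y^α) :=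
                mul_le_mul_of_nonneg_right hLα i3
          _ ≤ (1+(L:ℝ)) * ((1+2*Real.sqrt b) * d1^α + s^α * Y^α) :=
                mul_le_mul_of_nonneg_left i2 (by linarith)
        refine le_trans step1 ?_
        have e1 : (1+(L:ℝ)) * ((1+2*Real.sqrt b) * d1^α + s^α * Y^α) ≤
            (1+(L:ℝ)) * (1+2*Real.sqrt b) * (d1^α + s^α * Y^α) := by
          have : (1+2*Real.sqrt b) * d1^α + s^α * Y^α ≤
              (1+2*Real.sqrt b) * (d1^α + s^α * Y^α) := by
            have h1 : s^α * Y^α ≤ (1+2*Real.sqrt b) * (s^α * Y^α) :=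
              le_mul_of_one_le_left (mul_nonneg hsα hYα) (by linarith)
            have h2 : (1+2*Real.sqrt b) * (d1^α + s^α * Y^α) =
                (1+2*Real.sqrt b) * d1^α + (1+2*Real.sqrt b) * (s^α * Y^α) := by ring
            linarith
          calc (1+(L:ℝ)) * ((1+2*Real.sqrt b) * d1^α + s^α * Y^α)
              ≤ (1+(L:ℝ)) * ((1+2*Real.sqrt b) * (d1^α + s^α * Y^α)) :=
                mul_le_mul_of_nonneg_left this (by linarith)
          _ = (1+(L:ℝ)) * (1+2*Real.sqrt b) * (d1^α + s^α * Y^α) := by ring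
        refine le_trans e1 ?_
        exact mul_le_mul_of_nonneg_right hM3 (by positivity)
  -- Term 3
  have T3 : |σ (ε * x^2 * ‖z - zbar‖) - σ (ε * x'^2 * ‖z' - zbar‖)| ≤
      M * (d1 ^ α + s ^ (2*α) * Z ^ α) := by
    have hNdiff : |‖z - zbar‖ - ‖z' - zbar‖| ≤ Z := by
      have h := abs_norm_sub_norm_le (z - zbar) (z' - zbar)
      have : (z - zbar) - (z' - zbar) = z - z' := by abel
      rwa [this] at h
    have harg : |ε * x^2 * ‖z - zbar‖ - ε * x'^2 * ‖z' - zbar‖| ≤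
        4 * Real.sqrt f * d1 + s^2 * Z := by
      have key : ε * x^2 * ‖z - zbar‖ - ε * x'^2 * ‖z' - zbar‖ =
          ε * (x^2 - x'^2) * ‖z - zbar‖ + ε * x'^2 * (‖z - zbar‖ - ‖z' - zbar‖) := by ring
      have habs : |ε * (x^2 - x'^2)| ≤ 2 * d1 := by
        rw [abs_mul, abs_of_pos hε0]
        have h1 : |x^2 - x'^2| = |x + x'| * |x - x'| := by
          rw [← abs_mul]; congr 1; ring
        rw [h1, abs_of_nonneg (by linarith : (0:ℝ) ≤ x + x'), hd1]
        calc ε * ((x + x') * |x - x'|) ≤ 1 * ((x + x') * |x - x'|) :=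
              mul_le_mul_of_nonneg_right hε1.le
                (mul_nonneg (by linarith) (abs_nonneg _))
        _ = (x + x') * |x - x'| := one_mul _
        _ ≤ 2 * |x - x'| := mul_le_mul_of_nonneg_right (by linarith) (abs_nonneg _)
      have habs2 : ε * x'^2 ≤ s^2 := by
        have h1 : x'^2 ≤ s^2 := by
          rw [hs]; exact pow_le_pow_left₀ hx'0 (by linarith) 2
        calc ε * x'^2 ≤ 1 * x'^2 := mul_le_mul_of_nonneg_right hε1.le (sq_nonneg _)
        _ = x'^2 := one_mul _
        _ ≤ s^2 := h1
      calc |ε * x^2 * ‖z - zbar‖ - ε * x'^2 * ‖z' - zbar‖|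
          ≤ |ε * (x^2 - x'^2) * ‖z - zbar‖| + |ε * x'^2 * (‖z - zbar‖ - ‖z' - zbar‖)| := by
            rw [key]; exact abs_add_le _ _
      _ = |ε * (x^2 - x'^2)| * ‖z - zbar‖ + (ε * x'^2) * |‖z - zbar‖ - ‖z' - zbar‖| := by
            rw [abs_mul (ε * (x^2 - x'^2)), abs_mul (ε * x'^2),
              abs_of_nonneg (norm_nonneg (z - zbar)),
              abs_of_nonneg (show (0:ℝ) ≤ ε * x'^2 by positivity)]
      _ ≤ 2 * d1 * (2 * Real.sqrt f) + s^2 * Z := by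
            have e1 : |ε * (x^2 - x'^2)| * ‖z - zbar‖ ≤ 2 * d1 * (2 * Real.sqrt f) := by
              apply mul_le_mul habs hNz (norm_nonneg _) (by positivity)
            have e2 : (ε * x'^2) * |‖z - zbar‖ - ‖z' - zbar‖| ≤ s^2 * Z :=
              mul_le_mul habs2 hNdiff (abs_nonneg _) (by positivity)
            linarith
      _ = 4 * Real.sqrt f * d1 + s^2 * Z := by ring
    set u : ℝ := 4 * Real.sqrt f * d1 + s^2 * Z with hu
    have hu0 : 0 ≤ u := by positivity
    have h1 : |σ (ε * x^2 * ‖z - zbar‖) - σ (ε * x'^2 * ‖z' - zbar‖)| ≤ min 1 ((L:ℝ) * u) := by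
      refine le_trans (hσd _ _) (min_le_min le_rfl ?_)
      exact mul_le_mul_of_nonneg_left harg hL0
    have h2 : min 1 ((L:ℝ) * u) ≤ ((L:ℝ) * u) ^ α :=
      aux_min_le_rpow (by positivity) hα0 hα1.le
    have h3 : ((L:ℝ) * u) ^ α ≤ (L:ℝ)^α * ((4 * Real.sqrt f * d1) ^ α + (s^2 * Z) ^ α) := by
      rw [Real.mul_rpow hL0 hu0]
      apply mul_le_mul_of_nonneg_left _ (Real.rpow_nonneg hL0 α)
      exact aux_rpow_add_le (by positivity) (by positivity) hα0.le hα1.le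
    have h4 : (4 * Real.sqrt f * d1) ^ α = (4*Real.sqrt f)^α * d1^α :=
      Real.mul_rpow (by positivity) hd10
    have h5 : (s^2 * Z) ^ α = s^(2*α) * Z^α := by
      rw [Real.mul_rpow (by positivity) hZ0]
      congr 1
      rw [← Real.rpow_natCast s 2, ← Real.rpow_mul hs0]
      norm_num
    have hfac : (4*Real.sqrt f)^α ≤ 1 + 4*Real.sqrt f :=
      aux_rpow_le_one_add (by positivity) hα0.le hα1.le
    have hLαnn : 0 ≤ (L:ℝ)^α := Real.rpow_nonneg hL0 α
    have step1 : (L:ℝ)^α * ((4*Real.sqrt f)^α * d1^α + s^(2*α) * Z^α) ≤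
        (1+(L:ℝ)) * ((1+4*Real.sqrt f) * (d1^α + s^(2*α) * Z^α)) := by
      have i3 : 0 ≤ (4*Real.sqrt f)^α * d1^α + s^(2*α) * Z^α :=
        add_nonneg (mul_nonneg (Real.rpow_nonneg (by positivity) α) hd1α)
          (mul_nonneg hs2α hZα)
      have i2 : (4*Real.sqrt f)^α * d1^α + s^(2*α) * Z^α ≤
          (1+4*Real.sqrt f) * (d1^α + s^(2*α) * Z^α) := by
        have i1 : (4*Real.sqrt f)^α * d1^α ≤ (1+4*Real.sqrt f) * d1^α :=
          mul_le_mul_of_nonneg_right hfac hd1α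
        have j1 : s^(2*α) * Z^α ≤ (1+4*Real.sqrt f) * (s^(2*α) * Z^α) :=
          le_mul_of_one_le_left (mul_nonneg hs2α hZα) (by linarith)
        have j2 : (1+4*Real.sqrt f) * (d1^α + s^(2*α) * Z^α) =
            (1+4*Real.sqrt f) * d1^α + (1+4*Real.sqrt f) * (s^(2*α) * Z^α) := by ring
        linarith
      calc (L:ℝ)^α * ((4*Real.sqrt f)^α * d1^α + s^(2*α) * Z^α)
          ≤ (1+(L:ℝ)) * ((4*Real.sqrt f)^α * d1^α + s^(2*α) * Z^α) :=
            mul_le_mul_of_nonneg_right hLα i3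
      _ ≤ (1+(L:ℝ)) * ((1+4*Real.sqrt f) * (d1^α + s^(2*α) * Z^α)) :=
            mul_le_mul_of_nonneg_left i2 (by linarith)
    calc |σ (ε * x^2 * ‖z - zbar‖) - σ (ε * x'^2 * ‖z' - zbar‖)|
        ≤ (L:ℝ)^α * ((4*Real.sqrt f)^α * d1^α + s^(2*α) * Z^α) := by
          rw [← h4, ← h5]; exact le_trans h1 (le_trans h2 h3)
    _ ≤ (1+(L:ℝ)) * ((1+4*Real.sqrt f) * (d1^α + s^(2*α) * Z^α)) := step1
    _ ≤ M * (d1 ^ α + s ^ (2*α) * Z ^ α) := by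
        have hnn : 0 ≤ d1^α + s^(2*α) * Z^α := add_nonneg hd1α (mul_nonneg hs2α hZα)
        have : (1+(L:ℝ)) * (1+4*Real.sqrt f) ≤ M := hM4
        calc (1+(L:ℝ)) * ((1+4*Real.sqrt f) * (d1^α + s^(2*α) * Z^α))
            = ((1+(L:ℝ)) * (1+4*Real.sqrt f)) * (d1^α + s^(2*α) * Z^α) := by ring
        _ ≤ M * (d1 ^ α + s ^ (2*α) * Z ^ α) := mul_le_mul_of_nonneg_right this hnn
  -- combine
  set S : ℝ := d1 ^ α + s ^ α * Y ^ α + s ^ (2*α) * Z ^ α with hS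
  have hS0 : 0 ≤ S := by
    have := mul_nonneg hsα hYα; have := mul_nonneg hs2α hZα
    simp only [hS]; linarith
  have main : |σ (x / ε) * σ (x * ‖y - ybar‖) * σ (ε * x ^ 2 * ‖z - zbar‖) -
      σ (x' / ε) * σ (x' * ‖y' - ybar‖) * σ (ε * x' ^ 2 * ‖z' - zbar‖)| ≤
      3 * M * ε ^ (-α) * S := by
    have hprod := aux_prod_diff (hσrange (x/ε)) (hσrange (x * ‖y - ybar‖))
      (hσrange (ε * x^2 * ‖z - zbar‖)) (hσrange (x'/ε)) (hσrange (x' * ‖y' - ybar‖))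
      (hσrange (ε * x'^2 * ‖z' - zbar‖))
    have hT2' : |σ (x * ‖y - ybar‖) - σ (x' * ‖y' - ybar‖)| ≤
        M * (ε ^ (-α) * (d1 ^ α + s ^ α * Y ^ α)) := by
      refine le_trans T2 ?_
      have hnn : 0 ≤ d1 ^ α + s ^ α * Y ^ α := add_nonneg hd1α (mul_nonneg hsα hYα)
      have : d1 ^ α + s ^ α * Y ^ α ≤ ε ^ (-α) * (d1 ^ α + s ^ α * Y ^ α) :=
        le_mul_of_one_le_left hnn hεα
      exact mul_le_mul_of_nonneg_left this hM0.le
    have hT3' : |σ (ε * x^2 * ‖z - zbar‖) - σ (ε * x'^2 * ‖z' - zbar‖)| ≤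
        M * (ε ^ (-α) * (d1 ^ α + s ^ (2*α) * Z ^ α)) := by
      refine le_trans T3 ?_
      have hnn : 0 ≤ d1 ^ α + s ^ (2*α) * Z ^ α := add_nonneg hd1α (mul_nonneg hs2α hZα)
      have : d1 ^ α + s ^ (2*α) * Z ^ α ≤ ε ^ (-α) * (d1 ^ α + s ^ (2*α) * Z ^ α) :=
        le_mul_of_one_le_left hnn hεα
      exact mul_le_mul_of_nonneg_left this hM0.le
    have hsum : M * (ε ^ (-α) * d1 ^ α) + M * (ε ^ (-α) * (d1 ^ α + s ^ α * Y ^ α)) +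
        M * (ε ^ (-α) * (d1 ^ α + s ^ (2*α) * Z ^ α)) ≤ 3 * M * ε ^ (-α) * S := by
      have hexp : 3 * M * ε ^ (-α) * S -
          (M * (ε ^ (-α) * d1 ^ α) + M * (ε ^ (-α) * (d1 ^ α + s ^ α * Y ^ α)) +
          M * (ε ^ (-α) * (d1 ^ α + s ^ (2*α) * Z ^ α))) =
          M * ε ^ (-α) * (2 * (s ^ α * Y ^ α) + 2 * (s ^ (2*α) * Z ^ α)) := by
        simp only [hS]; ring
      have q1 : 0 ≤ s ^ α * Y ^ α := mul_nonneg hsα hYα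
      have q2 : 0 ≤ s ^ (2*α) * Z ^ α := mul_nonneg hs2α hZα
      have q3 : (0:ℝ) ≤ M * ε ^ (-α) * (2 * (s ^ α * Y ^ α) + 2 * (s ^ (2*α) * Z ^ α)) :=
        mul_nonneg (mul_nonneg hM0.le hεα0) (by linarith)
      linarith
    calc |σ (x / ε) * σ (x * ‖y - ybar‖) * σ (ε * x ^ 2 * ‖z - zbar‖) -
        σ (x' / ε) * σ (x' * ‖y' - ybar‖) * σ (ε * x' ^ 2 * ‖z' - zbar‖)|
        ≤ |σ (x/ε) - σ (x'/ε)| + |σ (x * ‖y - ybar‖) - σ (x' * ‖y' - ybar‖)| +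
          |σ (ε * x^2 * ‖z - zbar‖) - σ (ε * x'^2 * ‖z' - zbar‖)| := hprod
    _ ≤ M * (ε ^ (-α) * d1 ^ α) + M * (ε ^ (-α) * (d1 ^ α + s ^ α * Y ^ α)) +
          M * (ε ^ (-α) * (d1 ^ α + s ^ (2*α) * Z ^ α)) := by
        have := T1; linarith [hT2', hT3']
    _ ≤ 3 * M * ε ^ (-α) * S := hsum
  constructor
  · exact main
  · -- second: S ≤ 3 * (sqrt D)^α
    set D : ℝ := d1 ^ 2 + s ^ 2 * Y ^ 2 + s ^ 4 * Z ^ 2 with hD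
    have hD0 : 0 ≤ D := by positivity
    have hsqD : 0 ≤ Real.sqrt D := Real.sqrt_nonneg _
    have e1 : d1 ^ α ≤ Real.sqrt D ^ α := by
      apply Real.rpow_le_rpow hd10 _ hα0.le
      have : d1 = Real.sqrt (d1^2) := (Real.sqrt_sq hd10).symm
      rw [this]
      apply Real.sqrt_le_sqrt
      have q1 : 0 ≤ s^2 * Y^2 := mul_nonneg (sq_nonneg s) (sq_nonneg Y)
      have q2 : 0 ≤ s^4 * Z^2 := mul_nonneg (pow_nonneg hs0 4) (sq_nonneg Z)
      simp only [hD]; linarith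
    have e2 : s ^ α * Y ^ α ≤ Real.sqrt D ^ α := by
      rw [← Real.mul_rpow hs0 hY0]
      apply Real.rpow_le_rpow (by positivity) _ hα0.le
      have : s * Y = Real.sqrt ((s*Y)^2) := (Real.sqrt_sq (by positivity)).symm
      rw [this]
      apply Real.sqrt_le_sqrt
      have q1 : 0 ≤ d1^2 := sq_nonneg d1
      have q2 : 0 ≤ s^4 * Z^2 := mul_nonneg (pow_nonneg hs0 4) (sq_nonneg Z)
      have q3 : (s*Y)^2 = s^2 * Y^2 := by ring
      simp only [hD]; linarith
    have e3 : s ^ (2*α) * Z ^ α ≤ Real.sqrt D ^ α := by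
      have hrw : s ^ (2*α) * Z ^ α = (s^2 * Z) ^ α := by
        rw [Real.mul_rpow (by positivity) hZ0]
        congr 1
        rw [← Real.rpow_natCast s 2, ← Real.rpow_mul hs0]
        norm_num
      rw [hrw]
      apply Real.rpow_le_rpow (by positivity) _ hα0.le
      have : s^2 * Z = Real.sqrt ((s^2*Z)^2) := (Real.sqrt_sq (by positivity)).symm
      rw [this]
      apply Real.sqrt_le_sqrt
      have q1 : 0 ≤ d1^2 := sq_nonneg d1
      have q2 : 0 ≤ s^2 * Y^2 := mul_nonneg (sq_nonneg s) (sq_nonneg Y)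
      have q3 : (s^2*Z)^2 = s^4 * Z^2 := by ring
      simp only [hD]; linarith
    have hSD : S ≤ 3 * Real.sqrt D ^ α := by simp only [hS]; linarith
    calc |σ (x / ε) * σ (x * ‖y - ybar‖) * σ (ε * x ^ 2 * ‖z - zbar‖) -
        σ (x' / ε) * σ (x' * ‖y' - ybar‖) * σ (ε * x' ^ 2 * ‖z' - zbar‖)|
        ≤ 3 * M * ε ^ (-α) * S := main
    _ ≤ 3 * M * ε ^ (-α) * (3 * Real.sqrt D ^ α) :=
        mul_le_mul_of_nonneg_left hSD (by positivity)
    _ = 9 * M * ε ^ (-α) * Real.sqrt D ^ α := by ring
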